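/- For the flat virtual knot \widetilde{K}_{p,q} whose Gauss diagram consists of p parallel horizontal chords and q parallel vertical chords, each horizontal chord meeting each vertical chord exactly once, every horizontal chord has index -q and every vertical chord has index p; hence w(\widetilde{K}_{p,q}) = q - p, and \widetilde{K}_{p,q} is a nontrivial flat virtual knot whenever p \neq q. -/
import Mathlib


open Finset

/-- An abstract interface for the combinatorics of virtual knot theory:
oriented virtual knot diagrams (Gauss diagrams with signed directed chords),
their real crossings, flat shadows, smoothings of crossings, and the
generalized Reidemeister moves.  Flat virtual knots and 2-component flat
virtual links appear as the types `UFlat`, `OFlat` and `Flat2` of equivalence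
classes under the flat generalized Reidemeister moves. -/
structure VKT where
  /-- Oriented virtual knot diagrams (Gauss diagrams with signed, directed chords). -/
  Diagram : Type
  /-- The real crossings (chords of the Gauss diagram) of a diagram. -/
  Crossing : Diagram → Type
  crossingFintype : ∀ D, Fintype (Crossing D)
  crossingDecEq : ∀ D, DecidableEq (Crossing D)
  /-- The sign (local writhe) of a real crossing. -/
  sign : ∀ {D}, Crossing D → ℤ
  sign_unit : ∀ {D} (c : Crossing D), sign c = 1 ∨ sign c = -1
  /-- Equivalence of diagrams generated by the generalized Reidemeister moves;
  virtual knots are the equivalence classes. -/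
  equiv : Diagram → Diagram → Prop
  /-- Unoriented flat virtual knots (classes of unoriented flat diagrams modulo
  the flat generalized Reidemeister moves); the basis of the module `𝓜₁ᵘ`. -/
  UFlat : Type
  /-- Oriented flat virtual knots. -/
  OFlat : Type
  /-- The (unoriented) shadow `F(K)` of a diagram, as an unoriented flat virtual knot. -/
  shadow : Diagram → UFlat
  /-- The oriented shadow of a diagram, as an oriented flat virtual knot. -/
  oshadow : Diagram → OFlat
  /-- The trivial (unknotted) unoriented flat virtual knot. -/
  trivialU : UFlat
  /-- The unoriented flat virtual knot `K̃_c` obtained by 0-smoothing a real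
  crossing (the smoothing preserving one component) and taking the shadow. -/
  smooth0 : ∀ {D}, Crossing D → UFlat
  /-- Oriented 2-component flat virtual links; the basis of the module `𝓜₂`. -/
  Flat2 : Type
  /-- The oriented 2-component flat virtual link `L̃_c` obtained by 1-smoothing a
  real crossing (the oriented smoothing splitting the knot into two components)
  and taking the shadow. -/
  smooth1 : ∀ {D}, Crossing D → Flat2
  /-- `F(K) ∪ U` : the shadow of `K` together with a disjoint unknotted component. -/
  shadowCupU : Diagram → Flat2
  /-- `D` is a classical knot diagram (a planar Gauss-diagram realization with no
  virtual crossings). -/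
  IsClassical : Diagram → Prop
  /-- `R1 D D' c e` : `D'` is obtained from `D` by a first Reidemeister move creating
  the real crossing `c`; `e` identifies the crossings of `D` with the remaining
  (uninvolved) crossings of `D'`. -/
  R1 : ∀ (D D' : Diagram) (_c : Crossing D'), (Crossing D → Crossing D') → Prop
  /-- `R2 D D' c₁ c₂ e` : `D'` is obtained from `D` by a second Reidemeister move
  creating the real crossings `c₁, c₂`; `e` identifies the uninvolved crossings. -/
  R2 : ∀ (D D' : Diagram) (_c₁ _c₂ : Crossing D'), (Crossing D → Crossing D') → Prop
  /-- `R3 D D' c₁ c₂ c₃ c₁' c₂' c₃' e` : `D` and `D'` are related by a third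
  Reidemeister move whose three involved crossings `c₁, c₂, c₃` of `D` correspond
  to `c₁', c₂', c₃'` of `D'`; `e` identifies all the crossings of `D` with those
  of `D'`. -/
  R3 : ∀ (D D' : Diagram) (_c₁ _c₂ _c₃ : Crossing D) (_c₁' _c₂' _c₃' : Crossing D'),
      (Crossing D → Crossing D') → Prop
  /-- `Detour D D' e` : `D` and `D'` are related by a detour move (a purely virtual
  Reidemeister move or the mixed move `Ω₃ᵛ`), which involves no real crossing;
  `e` is the canonical identification of the real crossings. -/
  Detour : ∀ (D D' : Diagram), (Crossing D ≃ Crossing D') → Prop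
  /-- The crossing change (switch of over/under information) at a real crossing. -/
  switch : ∀ (D : Diagram), Crossing D → Diagram
  /-- The canonical identification of the crossings of `D` with those of `switch D c`. -/
  switchEquiv : ∀ (D : Diagram) (c : Crossing D), Crossing D ≃ Crossing (switch D c)
  /-- `r(K)` : reversing the orientation of a diagram. -/
  rev : Diagram → Diagram
  /-- The canonical identification of crossings under orientation reversal. -/
  revEquiv : ∀ D, Crossing D ≃ Crossing (rev D)
  /-- `m(K)` : switching all real crossings of a diagram. -/
  mir : Diagram → Diagram
  /-- The canonical identification of crossings under `mir`. -/
  mirEquiv : ∀ D, Crossing D ≃ Crossing (mir D)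
  /-- Reversing the orientation of an oriented 2-component flat virtual link. -/
  rev2 : Flat2 → Flat2
  /-- The index `Ind(c)` of a real crossing: the signed count of chords linking the
  chord `c` in the Gauss diagram (signs of chords whose arrowhead lies on the arc
  from the head of `c` to its tail, minus the signs of those on the other arc). -/
  Ind : ∀ {D}, Crossing D → ℤ
  /-- The flat linking number of a 2-component flat virtual link. -/
  lk2 : Flat2 → ℕ
  /-- Direction-decorated Gauss diagrams: directed chords without signs. -/
  GaussDir : Type
  /-- The underlying direction-decorated Gauss diagram of a virtual knot diagram
  (forget the signs of the chords and the planar realization). -/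
  gauss : Diagram → GaussDir
  /-- All real crossings of the diagram are positive. -/
  IsPositive : Diagram → Prop
  /-- Flat virtual knot diagrams. -/
  FDiagram : Type
  /-- The flat crossings of a flat virtual knot diagram. -/
  fCrossing : FDiagram → Type
  fFintype : ∀ F, Fintype (fCrossing F)
  /-- The index of a flat crossing, computed in the all-positive virtual knot
  diagram lying over the flat diagram. -/
  fInd : ∀ {F}, fCrossing F → ℤ
  /-- Equivalence of flat diagrams under the flat generalized Reidemeister moves. -/
  fEquiv : FDiagram → FDiagram → Prop
  /-- The shadow of a virtual knot diagram, as a flat diagram (`D` overlies `forget D`). -/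
  forget : Diagram → FDiagram
  /-- The flat virtual knot represented by a flat diagram. -/
  fclass : FDiagram → UFlat
  /-- The connected sum of two diagrams, performed at a fixed chosen place. -/
  csum : Diagram → Diagram → Diagram
  /-- The connected sum of flat virtual knots, performed at the same fixed place. -/
  csumU : UFlat → UFlat → UFlat
  /-- The identification of the crossings of a connected sum with the disjoint
  union of the crossings of the two summands. -/
  csumEquiv : ∀ D₁ D₂, (Crossing D₁ ⊕ Crossing D₂) ≃ Crossing (csum D₁ D₂)

attribute [instance] VKT.crossingFintype VKT.crossingDecEq VKT.fFintype

namespace VKT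

variable (T : VKT)

/-- The writhe `w(K)` of a diagram: the sum of the signs of its real crossings. -/
def writhe (D : T.Diagram) : ℤ := ∑ c : T.Crossing D, T.sign c

/-- The invariant `𝓕(K) = ∑_c w(c)·K̃_c − w(K)·F(K)`, an element of the free
ℤ-module `𝓜₁ᵘ` on unoriented flat virtual knots. -/
noncomputable def Fcal (D : T.Diagram) : T.UFlat →₀ ℤ :=
  (∑ c : T.Crossing D, T.sign c • Finsupp.single (T.smooth0 c) (1 : ℤ))
    - T.writhe D • Finsupp.single (T.shadow D) (1 : ℤ)

/-- The invariant `𝓛(K) = ∑_c w(c)·L̃_c − w(K)·(F(K) ∪ U)`, an element of the free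
ℤ-module `𝓜₂` on oriented 2-component flat virtual links. -/
noncomputable def Lcal (D : T.Diagram) : T.Flat2 →₀ ℤ :=
  (∑ c : T.Crossing D, T.sign c • Finsupp.single (T.smooth1 c) (1 : ℤ))
    - T.writhe D • Finsupp.single (T.shadowCupU D) (1 : ℤ)

/-- The writhe `w(K̃) = ∑_c sgn(Ind(c))` of a flat virtual knot diagram. -/
def wflat (F : T.FDiagram) : ℤ := ∑ c : T.fCrossing F, (T.fInd c).sign

end VKT

/-- For the lattice-like flat virtual knot `K̃_{p,q}` (its crossings are `p` horizontal
chords and `q` vertical chords, each horizontal chord crossing each vertical chord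
exactly once, with the linking contributions `ε` as dictated by the directions):
every horizontal chord has index `−q`, every vertical chord has index `p`, hence
`w(K̃_{p,q}) = q − p`, and `K̃_{p,q}` is a nontrivial flat virtual knot whenever
`p ≠ q`.  (The hypothesis `hwinv` records that `w` is a flat virtual knot invariant,
which vanishes on any crossingless — hence unknotted — diagram.) -/
theorem lattice_flat_knot_nontrivial (T : VKT) (p q : ℕ) (hp : 0 < p) (hq : 0 < q)
    (F : T.FDiagram) (e : T.fCrossing F ≃ (Fin p ⊕ Fin q))
    (ε : T.fCrossing F → T.fCrossing F → ℤ)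
    (hHV : ∀ (i : Fin p) (j : Fin q),
      ε (e.symm (Sum.inl i)) (e.symm (Sum.inr j)) = -1)
    (hVH : ∀ (j : Fin q) (i : Fin p),
      ε (e.symm (Sum.inr j)) (e.symm (Sum.inl i)) = 1)
    (hHH : ∀ i i' : Fin p, ε (e.symm (Sum.inl i)) (e.symm (Sum.inl i')) = 0)
    (hVV : ∀ j j' : Fin q, ε (e.symm (Sum.inr j)) (e.symm (Sum.inr j')) = 0)
    (hdef : ∀ c : T.fCrossing F, T.fInd c = ∑ c' : T.fCrossing F, ε c c')
    (hwinv : ∀ F₁ F₂ : T.FDiagram, T.fEquiv F₁ F₂ → T.wflat F₁ = T.wflat F₂) :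
    (∀ i : Fin p, T.fInd (e.symm (Sum.inl i)) = -(q : ℤ)) ∧
    (∀ j : Fin q, T.fInd (e.symm (Sum.inr j)) = (p : ℤ)) ∧
    T.wflat F = (q : ℤ) - (p : ℤ) ∧
    (p ≠ q → ∀ U : T.FDiagram, IsEmpty (T.fCrossing U) → ¬ T.fEquiv F U) := by
  have hsum : ∀ c : T.fCrossing F,
      (∑ c' : T.fCrossing F, ε c c') =
      (∑ i' : Fin p, ε c (e.symm (Sum.inl i'))) +
      (∑ j' : Fin q, ε c (e.symm (Sum.inr j'))) := by
    intro c
    rw [Fintype.sum_equiv e (fun c' => ε c c') (fun x => ε c (e.symm x))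
      (fun c' => by simp), Fintype.sum_sum_type]
  have hH : ∀ i : Fin p, T.fInd (e.symm (Sum.inl i)) = -(q : ℤ) := by
    intro i
    rw [hdef, hsum]
    simp [hHH, hVV, hHV, hVH]
  have hV : ∀ j : Fin q, T.fInd (e.symm (Sum.inr j)) = (p : ℤ) := by
    intro j
    rw [hdef, hsum]
    simp [hHH, hVV, hHV, hVH]
  have hw : T.wflat F = (q : ℤ) - (p : ℤ) := by
    unfold VKT.wflat
    rw [show (∑ c : T.fCrossing F, (T.fInd c).sign) =
        ∑ x : Fin p ⊕ Fin q, (T.fInd (e.symm x)).sign from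
      (Fintype.sum_equiv e _ _ (fun c => by rw [e.symm_apply_apply])),
      Fintype.sum_sum_type]
    have h1 : ∀ i : Fin p, (T.fInd (e.symm (Sum.inl i))).sign = -1 := by
      intro i; rw [hH i]
      exact Int.sign_eq_neg_one_of_neg (by omega)
    have h2 : ∀ j : Fin q, (T.fInd (e.symm (Sum.inr j))).sign = 1 := by
      intro j; rw [hV j]
      exact Int.sign_eq_one_of_pos (by omega)
    simp [h1, h2]
    ring
  refine ⟨hH, hV, hw, ?_⟩
  intro hpq U hU hequiv
  have h0 : T.wflat U = 0 := by
    unfold VKT.wflat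
    exact Finset.sum_of_isEmpty _
  have := hwinv F U hequiv
  rw [hw, h0] at this
  omega
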